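/- For a map κ on a state space with per-capita update π_i(κ(z)) = π_i(z)·Ψ_i(z) where Ψ_i is positive and continuous, if μ is an ergodic κ-invariant Borel probability measure with compact support such that μ-almost every z has π_i(z) > 0, then ∫ ln Ψ_i(z) μ(dz) = 0. -/

import Mathlib

open MeasureTheory Filter

/-- A continuous function is integrable w.r.t. a probability measure giving full mass to a
compact set. -/
theorem integrable_of_continuous_of_compact_full
    {S : Type*} [MetricSpace S] [MeasurableSpace S] [BorelSpace S]
    (f : S → ℝ) (hf : Continuous f) (μ : Measure S) [IsProbabilityMeasure μ]
    {K : Set S} (hK : IsCompact K) (hμK : μ K = 1) : Integrable f μ := by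
  obtain ⟨C, hC⟩ := hK.exists_bound_of_continuousOn hf.continuousOn
  have hKc : μ Kᶜ = 0 := (prob_compl_eq_zero_iff hK.isClosed.measurableSet).mpr hμK
  have haeK : ∀ᵐ z ∂μ, z ∈ K := by
    rw [ae_iff]
    exact hKc
  have hb : ∀ᵐ z ∂μ, ‖f z‖ ≤ C := by
    filter_upwards [haeK] with z hz using hC z hz
  exact (integrable_const C).mono' hf.aestronglyMeasurable hb

/-- Clamping to `[-M, M]` is 1-Lipschitz. -/
theorem clamp_lipschitz (M x y : ℝ) :
    |max (min x M) (-M) - max (min y M) (-M)| ≤ |x - y| :=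
  (abs_max_sub_max_le_abs _ _ _).trans <| by
    simpa using (abs_min_sub_min_le_max x M y M).trans (by simp)

theorem clamp_eq_self {M x : ℝ} (h : |x| ≤ M) : max (min x M) (-M) = x := by
  rw [abs_le] at h
  rw [min_eq_left h.2, max_eq_left h.1]

/-- If `μ` is an ergodic `κ`-invariant Borel probability measure with compact
support giving full mass to `{z | 0 < π z}`, and `π (κ z) = π z * Ψ z` with `Ψ` positive
continuous and `π` continuous nonnegative, then `∫ ln Ψ dμ = 0`. -/
theorem stmt0
    {S : Type*} [MetricSpace S] [MeasurableSpace S] [BorelSpace S]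
    (κ : S → S) (hκ : Continuous κ)
    (π Ψ : S → ℝ) (hπ : Continuous π) (hπ0 : ∀ z, 0 ≤ π z)
    (hΨ : Continuous Ψ) (hΨ0 : ∀ z, 0 < Ψ z)
    (hrel : ∀ z, π (κ z) = π z * Ψ z)
    (μ : Measure S) [IsProbabilityMeasure μ]
    (herg : Ergodic κ μ)
    (hcomp : ∃ K : Set S, IsCompact K ∧ μ K = 1)
    (hpos : μ {z | 0 < π z} = 1) :
    ∫ z, Real.log (Ψ z) ∂μ = 0 := by
  obtain ⟨K, hKcomp, hKμ⟩ := hcomp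
  have hmap : Measure.map κ μ = μ := herg.toMeasurePreserving.map_eq
  have hπm : Measurable π := hπ.measurable
  -- the clamped versions of `log ∘ π`
  set g : ℕ → S → ℝ := fun n z => max (min (Real.log (π z)) (n : ℝ)) (-(n : ℝ)) with hg
  have hgm : ∀ n, Measurable (g n) := fun n =>
    ((Real.measurable_log.comp hπm).min measurable_const).max measurable_const
  have hgb : ∀ n z, ‖g n z‖ ≤ (n : ℝ) := by
    intro n z
    rw [Real.norm_eq_abs, abs_le]
    refine ⟨le_max_right _ _, max_le (min_le_right _ _) (by simp [neg_le_self_iff])⟩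
  have hgint : ∀ n, Integrable (g n) μ := fun n =>
    (integrable_const (n : ℝ)).mono' (hgm n).aestronglyMeasurable (Filter.Eventually.of_forall (hgb n))
  have hgκint : ∀ n, Integrable (fun z => g n (κ z)) μ := fun n =>
    (integrable_const (n : ℝ)).mono' ((hgm n).comp hκ.measurable).aestronglyMeasurable
      (Filter.Eventually.of_forall fun z => hgb n (κ z))
  have hinv : ∀ n, ∫ z, g n (κ z) ∂μ = ∫ z, g n z ∂μ := by
    intro n
    rw [← integral_map hκ.aemeasurable (hgm n).aestronglyMeasurable, hmap]
  -- the difference functions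
  set F : ℕ → S → ℝ := fun n z => g n (κ z) - g n z with hF
  have hFzero : ∀ n, ∫ z, F n z ∂μ = 0 := by
    intro n
    rw [hF]
    simp only
    rw [integral_sub (hgκint n) (hgint n), hinv n, sub_self]
  -- almost everywhere, π is positive
  have haepos : ∀ᵐ z ∂μ, 0 < π z := by
    have hs : MeasurableSet {z : S | 0 < π z} := measurableSet_lt measurable_const hπm
    rw [ae_iff]
    have : μ {z : S | 0 < π z}ᶜ = 0 := (prob_compl_eq_zero_iff hs).mpr hpos
    simpa [Set.compl_setOf] using this
  -- key identity: on `{π > 0}`, `log (π (κ z)) = log (π z) + log (Ψ z)`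
  have hkey : ∀ z, 0 < π z → Real.log (π (κ z)) = Real.log (π z) + Real.log (Ψ z) := by
    intro z hz
    rw [hrel z, Real.log_mul hz.ne' (hΨ0 z).ne']
  -- uniform bound for dominated convergence
  have hbound : ∀ n, ∀ᵐ z ∂μ, ‖F n z‖ ≤ |Real.log (Ψ z)| := by
    intro n
    filter_upwards [haepos] with z hz
    have h := clamp_lipschitz (n : ℝ) (Real.log (π (κ z))) (Real.log (π z))
    have he : Real.log (π (κ z)) - Real.log (π z) = Real.log (Ψ z) := by
      rw [hkey z hz]; ring
    rw [he] at h
    simpa [hF, hg, Real.norm_eq_abs] using h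
  -- pointwise convergence
  have hconv : ∀ᵐ z ∂μ, Tendsto (fun n => F n z) atTop (nhds (Real.log (Ψ z))) := by
    filter_upwards [haepos] with z hz
    have hev : ∀ᶠ n in atTop, F n z = Real.log (Ψ z) := by
      filter_upwards [eventually_ge_atTop ⌈max |Real.log (π z)| |Real.log (π (κ z))|⌉₊]
        with n hn
      have hn' : max |Real.log (π z)| |Real.log (π (κ z))| ≤ (n : ℝ) :=
        (Nat.le_ceil _).trans (Nat.cast_le.mpr hn)
      have h1 : |Real.log (π z)| ≤ (n : ℝ) := (le_max_left _ _).trans hn'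
      have h2 : |Real.log (π (κ z))| ≤ (n : ℝ) := (le_max_right _ _).trans hn'
      simp only [hF, hg]
      rw [clamp_eq_self h2, clamp_eq_self h1, hkey z hz]
      ring
    exact Tendsto.congr' (hev.mono fun _ h => h.symm) tendsto_const_nhds
  -- integrability of the dominating function
  have hbint : Integrable (fun z => |Real.log (Ψ z)|) μ :=
    integrable_of_continuous_of_compact_full _ ((hΨ.log fun z => (hΨ0 z).ne').abs) μ hKcomp hKμ
  have hFm : ∀ n, AEStronglyMeasurable (F n) μ := fun n =>
    (((hgm n).comp hκ.measurable).sub (hgm n)).aestronglyMeasurable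
  have htend : Tendsto (fun n => ∫ z, F n z ∂μ) atTop (nhds (∫ z, Real.log (Ψ z) ∂μ)) :=
    tendsto_integral_of_dominated_convergence _ hFm hbint hbound hconv
  have htend0 : Tendsto (fun n => ∫ z, F n z ∂μ) atTop (nhds (0 : ℝ)) := by
    simpa [hFzero] using (tendsto_const_nhds : Tendsto (fun _ : ℕ => (0:ℝ)) atTop (nhds 0))
  exact (tendsto_nhds_unique htend htend0)
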